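/- arXiv:2103.04157 — 3 statements merged into one kernel-verified Lean document; each statement's English description precedes it below -/
import Mathlib

section
/- The ℤ-linear maps φ, ψ: L → L determined by φ: u ↦ u, v ↦ v+py, x ↦ x−pu, y ↦ y (identity on z, t and the two ℤ⁸ factors) and ψ: u ↦ u, v ↦ v+qt, x ↦ x−nz+qnu, y ↦ y, z ↦ z−qu, t ↦ t+ny (identity on the two ℤ⁸ factors) are isometries of (L,Q); moreover their ℝ-linear extensions satisfy φ(f_i(s,r)) = f_i(s+p,r) and ψ(f_i(s,r)) = f_i(s+nr,r+q) for i = 1,2,3 and all (s,r) ∈ ℝ². -/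
open scoped BigOperators

/-- The Cartan matrix of E8 (Bourbaki numbering, 0-indexed): diagonal entries 2,
entry -1 exactly for the edges of the E8 Dynkin diagram. -/
def E8Cartan : Matrix (Fin 8) (Fin 8) ℤ :=
  !![ 2,  0, -1,  0,  0,  0,  0,  0;
      0,  2,  0, -1,  0,  0,  0,  0;
     -1,  0,  2, -1,  0,  0,  0,  0;
      0, -1, -1,  2, -1,  0,  0,  0;
      0,  0,  0, -1,  2, -1,  0,  0;
      0,  0,  0,  0, -1,  2, -1,  0;
      0,  0,  0,  0,  0, -1,  2, -1;
      0,  0,  0,  0,  0,  0, -1,  2]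

/-- Integer value `dᵀ C d'` of the E8 Cartan pairing. -/
def pairCZ (d d' : Fin 8 → ℤ) : ℤ := ∑ i, ∑ j, d i * E8Cartan i j * d' j

/-- Real value `wᵀ C w'` of the (real extension of the) E8 Cartan pairing. -/
def pairCR (w w' : Fin 8 → ℝ) : ℝ := ∑ i, ∑ j, w i * (E8Cartan i j : ℝ) * w' j

/-- The `−E8` pairing, real coefficients. -/
def innE8R (w w' : Fin 8 → ℝ) : ℝ := -pairCR w w'

/-- The `−E8` pairing, integer coefficients. -/
def innE8Z (d d' : Fin 8 → ℤ) : ℤ := -pairCZ d d'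

/-- The K3 lattice `L = ℤ⁶ ⊕ ℤ⁸ ⊕ ℤ⁸`. -/
abbrev LZ := (Fin 6 → ℤ) × (Fin 8 → ℤ) × (Fin 8 → ℤ)

/-- `L_ℝ = ℝ⁶ ⊕ ℝ⁸ ⊕ ℝ⁸`. -/
abbrev LR := (Fin 6 → ℝ) × (Fin 8 → ℝ) × (Fin 8 → ℝ)

/-- The K3 bilinear form `Q` (integer version).  Coordinates `0,…,5` of the first
factor are `u, v, x, y, z, t`; one has `Q(u,v) = Q(x,y) = Q(z,t) = 1`, all other
pairings among `u,…,t` vanish, each `ℤ⁸` factor carries `−C`, and the three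
factors are mutually orthogonal. -/
def QZ (d d' : LZ) : ℤ :=
  (d.1 0 * d'.1 1 + d.1 1 * d'.1 0 + d.1 2 * d'.1 3 + d.1 3 * d'.1 2
    + d.1 4 * d'.1 5 + d.1 5 * d'.1 4)
  - pairCZ d.2.1 d'.2.1 - pairCZ d.2.2 d'.2.2

/-- The K3 bilinear form `Q`, extended `ℝ`-bilinearly to `L_ℝ`. -/
def QR (w w' : LR) : ℝ :=
  (w.1 0 * w'.1 1 + w.1 1 * w'.1 0 + w.1 2 * w'.1 3 + w.1 3 * w'.1 2
    + w.1 4 * w'.1 5 + w.1 5 * w'.1 4)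
  - pairCR w.2.1 w'.2.1 - pairCR w.2.2 w'.2.2

/-- The inclusion `L → L_ℝ`. -/
def incl (d : LZ) : LR :=
  (fun i => (d.1 i : ℝ), fun i => (d.2.1 i : ℝ), fun i => (d.2.2 i : ℝ))

/-- The family of 45 real numbers `1`, `eᵢ` (`1 ≤ i ≤ 8`) and `eᵢ·eⱼ` (`1 ≤ i ≤ j ≤ 8`). -/
def fam45 (e : Fin 8 → ℝ) : Option (Fin 8 ⊕ {p : Fin 8 × Fin 8 // p.1 ≤ p.2}) → ℝ
  | none => 1
  | some (Sum.inl i) => e i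
  | some (Sum.inr p) => e p.1.1 * e p.1.2

/-- `φ` on the `ℤ⁶`/`ℝ⁶` factor: `u ↦ u`, `v ↦ v + p·y`, `x ↦ x − p·u`, `y ↦ y`,
`z ↦ z`, `t ↦ t` (in coordinates). -/
def phi6 (p : ℤ) {R : Type*} [Ring R] (w : Fin 6 → R) : Fin 6 → R :=
  ![w 0 - (p : R) * w 2, w 1, w 2, (p : R) * w 1 + w 3, w 4, w 5]

/-- `φ : L → L`, identity on the two `ℤ⁸` factors. -/
def phiZ (p : ℤ) (d : LZ) : LZ := (phi6 p d.1, d.2.1, d.2.2)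

/-- The `ℝ`-linear extension of `φ`. -/
def phiR (p : ℤ) (w : LR) : LR := (phi6 p w.1, w.2.1, w.2.2)

/-- `ψ` on the `ℤ⁶`/`ℝ⁶` factor: `u ↦ u`, `v ↦ v + q·t`, `x ↦ x − n·z + q·n·u`,
`y ↦ y`, `z ↦ z − q·u`, `t ↦ t + n·y` (in coordinates). -/
def psi6 (n q : ℤ) {R : Type*} [Ring R] (w : Fin 6 → R) : Fin 6 → R :=
  ![w 0 + (q : R) * (n : R) * w 2 - (q : R) * w 4, w 1, w 2,
    w 3 + (n : R) * w 5, w 4 - (n : R) * w 2, (q : R) * w 1 + w 5]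

/-- `ψ : L → L`, identity on the two `ℤ⁸` factors. -/
def psiZ (n q : ℤ) (d : LZ) : LZ := (psi6 n q d.1, d.2.1, d.2.2)

/-- The `ℝ`-linear extension of `ψ`. -/
def psiR (n q : ℤ) (w : LR) : LR := (psi6 n q w.1, w.2.1, w.2.2)

/-- `f₁(s,r) = 2u + v + s·y + r·t`. -/
def f1 (s r : ℝ) : LR := (![2, 1, 0, s, 0, r], 0, 0)

/-- `f₂(s,r) = q·x + (n·r² − q·s)·u − n·r·z + 2q·y + a`, where `a = (0, e)`. -/
def f2 (n q : ℤ) (e : Fin 8 → ℝ) (s r : ℝ) : LR :=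
  (![(n : ℝ) * r ^ 2 - (q : ℝ) * s, 0, (q : ℝ), 2 * (q : ℝ), -((n : ℝ) * r), 0], 0, e)

/-- `f₃(s,r) = z − r·u + 2q²·t + 2nqr·y + b`, where `b = (e, 0)`. -/
def f3 (n q : ℤ) (e : Fin 8 → ℝ) (s r : ℝ) : LR :=
  (![-r, 0, 0, 2 * (n : ℝ) * (q : ℝ) * r, 1, 2 * (q : ℝ) ^ 2], e, 0)

lemma cons_val_five' {R : Type*} (a b c d e f : R) : ![a, b, c, d, e, f] (5 : Fin 6) = f := rfl

lemma cons_val_four' {R : Type*} (a b c d e f : R) : ![a, b, c, d, e, f] (4 : Fin 6) = e := rfl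

/-- `φ` and `ψ` are isometries of `(L, Q)` and their `ℝ`-linear extensions satisfy
`φ(fᵢ(s,r)) = fᵢ(s+p,r)` and `ψ(fᵢ(s,r)) = fᵢ(s+nr,r+q)` for `i = 1, 2, 3`. -/
theorem statement11 (e : Fin 8 → ℝ) (n p q : ℤ) (hn : 1 ≤ n) (hp : 1 ≤ p) (hq : 1 ≤ q) :
    (∀ d d' : LZ, QZ (phiZ p d) (phiZ p d') = QZ d d') ∧
    (∀ d d' : LZ, QZ (psiZ n q d) (psiZ n q d') = QZ d d') ∧
    (∀ s r : ℝ,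
      (phiR p (f1 s r) = f1 (s + (p : ℝ)) r ∧
        phiR p (f2 n q e s r) = f2 n q e (s + (p : ℝ)) r ∧
        phiR p (f3 n q e s r) = f3 n q e (s + (p : ℝ)) r) ∧
      (psiR n q (f1 s r) = f1 (s + (n : ℝ) * r) (r + (q : ℝ)) ∧
        psiR n q (f2 n q e s r) = f2 n q e (s + (n : ℝ) * r) (r + (q : ℝ)) ∧
        psiR n q (f3 n q e s r) = f3 n q e (s + (n : ℝ) * r) (r + (q : ℝ)))) := by
  refine ⟨?_, ?_, ?_⟩
  · intro d d'
    simp only [QZ, phiZ, phi6, Matrix.cons_val_zero, Matrix.cons_val_one, Matrix.head_cons,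
      Matrix.cons_val_two, Matrix.tail_cons, Matrix.cons_val_three, Matrix.cons_val_four,
      Fin.isValue, Matrix.cons_val_fin_one, Matrix.cons_val', cons_val_five', cons_val_four']
    ring
  · intro d d'
    simp only [QZ, psiZ, psi6, Matrix.cons_val_zero, Matrix.cons_val_one, Matrix.head_cons,
      Matrix.cons_val_two, Matrix.tail_cons, Matrix.cons_val_three, Matrix.cons_val_four,
      Fin.isValue, Matrix.cons_val_fin_one, Matrix.cons_val', cons_val_five', cons_val_four']
    ring
  · intro s r
    refine ⟨⟨?_, ?_, ?_⟩, ?_, ?_, ?_⟩ <;>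
    · simp only [phiR, psiR, phi6, psi6, f1, f2, f3, Matrix.cons_val_zero, Matrix.cons_val_one,
        Matrix.head_cons, Matrix.cons_val_two, Matrix.tail_cons, Matrix.cons_val_three,
        Matrix.cons_val_four, Fin.isValue, Matrix.cons_val_fin_one, Matrix.cons_val', cons_val_five', cons_val_four']
      refine Prod.ext ?_ rfl
      funext i
      fin_cases i <;> simp [cons_val_five', cons_val_four'] <;> ring
end

section
/- Assume |(e,e)| ≤ 1/2, where (e,e) = −eᵀCe. Then for every (s,r) ∈ ℝ²: Q(f₁(s,r),f₁(s,r)) = 4 > 0, Q(f₂(s,r),f₂(s,r)) = 4q² + (e,e) > 0, Q(f₃(s,r),f₃(s,r)) = 4q² + (e,e) > 0, and Q(f₂(s,r),f₃(s,r)) = Q(f₁(s,r),f₂(s,r)) = Q(f₁(s,r),f₃(s,r)) = 0. -/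
open scoped BigOperators

lemma vec6_two {α} (a b c d e f : α) : (![a,b,c,d,e,f] : Fin 6 → α) 2 = c := rfl
lemma vec6_three {α} (a b c d e f : α) : (![a,b,c,d,e,f] : Fin 6 → α) 3 = d := rfl
lemma vec6_four {α} (a b c d e f : α) : (![a,b,c,d,e,f] : Fin 6 → α) 4 = e := rfl
lemma vec6_five {α} (a b c d e f : α) : (![a,b,c,d,e,f] : Fin 6 → α) 5 = f := rfl

lemma pairCR_zero_left (w : Fin 8 → ℝ) : pairCR 0 w = 0 := by
  simp [pairCR]

lemma pairCR_zero_right (w : Fin 8 → ℝ) : pairCR w 0 = 0 := by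
  simp [pairCR]

/-- If `|(e,e)| ≤ 1/2` then for every `(s,r) ∈ ℝ²`: `Q(f₁,f₁) = 4 > 0`,
`Q(f₂,f₂) = Q(f₃,f₃) = 4q² + (e,e) > 0`, and `Q(f₂,f₃) = Q(f₁,f₂) = Q(f₁,f₃) = 0`. -/
theorem statement12 (e : Fin 8 → ℝ) (he : |innE8R e e| ≤ 1 / 2)
    (n p q : ℤ) (hn : 1 ≤ n) (hp : 1 ≤ p) (hq : 1 ≤ q) (s r : ℝ) :
    (QR (f1 s r) (f1 s r) = 4 ∧ 0 < QR (f1 s r) (f1 s r)) ∧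
    (QR (f2 n q e s r) (f2 n q e s r) = 4 * (q : ℝ) ^ 2 + innE8R e e ∧
      0 < QR (f2 n q e s r) (f2 n q e s r)) ∧
    (QR (f3 n q e s r) (f3 n q e s r) = 4 * (q : ℝ) ^ 2 + innE8R e e ∧
      0 < QR (f3 n q e s r) (f3 n q e s r)) ∧
    QR (f2 n q e s r) (f3 n q e s r) = 0 ∧ QR (f1 s r) (f2 n q e s r) = 0 ∧
    QR (f1 s r) (f3 n q e s r) = 0 := by
  have hq1 : (1:ℝ) ≤ (q:ℝ) := by exact_mod_cast hq
  have hee : -(1/2 : ℝ) ≤ innE8R e e := by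
    have := abs_le.mp he; linarith [this.1]
  have hpos : (0:ℝ) < 4 * (q : ℝ) ^ 2 + innE8R e e := by nlinarith
  simp only [innE8R] at hpos
  refine ⟨⟨?_, ?_⟩, ⟨?_, ?_⟩, ⟨?_, ?_⟩, ?_, ?_, ?_⟩ <;>
    simp only [QR, f1, f2, f3, pairCR_zero_left, pairCR_zero_right, innE8R,
      Matrix.cons_val_zero, Matrix.cons_val_one, Matrix.head_cons,
      vec6_two, vec6_three, vec6_four, vec6_five] <;>
    first
      | ring1
      | linarith [hpos]
      | (ring_nf; linarith [hpos])
end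

section
/- Assume the 45 real numbers 1, e_i (1 ≤ i ≤ 8), and e_i·e_j (1 ≤ i ≤ j ≤ 8) are linearly independent over ℚ, and |(e,e)| ≤ 1/2 where (e,e) = −eᵀCe. Then for every (s,r) ∈ ℝ² there is no d ∈ L with Q(d,d) = −2 and Q(d,f₁(s,r)) = Q(d,f₂(s,r)) = Q(d,f₃(s,r)) = 0. -/
open scoped BigOperators

-- ===================== auxiliary machinery =====================

lemma st13_pairCR_expand (x y : Fin 8 → ℝ) : pairCR x y = 2*x 0*y 0 - x 0*y 2 + 2*x 1*y 1 - x 1*y 3 - x 2*y 0 + 2*x 2*y 2 - x 2*y 3 - x 3*y 1 - x 3*y 2 + 2*x 3*y 3 - x 3*y 4 - x 4*y 3 + 2*x 4*y 4 - x 4*y 5 - x 5*y 4 + 2*x 5*y 5 - x 5*y 6 - x 6*y 5 + 2*x 6*y 6 - x 6*y 7 - x 7*y 6 + 2*x 7*y 7 := by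
  rw [pairCR]
  simp only [Fin.sum_univ_eight]
  simp only [show E8Cartan 0 0 = 2 from by decide, show E8Cartan 0 1 = 0 from by decide, show E8Cartan 0 2 = -1 from by decide, show E8Cartan 0 3 = 0 from by decide, show E8Cartan 0 4 = 0 from by decide, show E8Cartan 0 5 = 0 from by decide, show E8Cartan 0 6 = 0 from by decide, show E8Cartan 0 7 = 0 from by decide, show E8Cartan 1 0 = 0 from by decide, show E8Cartan 1 1 = 2 from by decide, show E8Cartan 1 2 = 0 from by decide, show E8Cartan 1 3 = -1 from by decide, show E8Cartan 1 4 = 0 from by decide, show E8Cartan 1 5 = 0 from by decide, show E8Cartan 1 6 = 0 from by decide, show E8Cartan 1 7 = 0 from by decide, show E8Cartan 2 0 = -1 from by decide, show E8Cartan 2 1 = 0 from by decide, show E8Cartan 2 2 = 2 from by decide, show E8Cartan 2 3 = -1 from by decide, show E8Cartan 2 4 = 0 from by decide, show E8Cartan 2 5 = 0 from by decide, show E8Cartan 2 6 = 0 from by decide, show E8Cartan 2 7 = 0 from by decide, show E8Cartan 3 0 = 0 from by decide, show E8Cartan 3 1 = -1 from by decide, show E8Cartan 3 2 = -1 from by decide,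 show E8Cartan 3 3 = 2 from by decide, show E8Cartan 3 4 = -1 from by decide, show E8Cartan 3 5 = 0 from by decide, show E8Cartan 3 6 = 0 from by decide, show E8Cartan 3 7 = 0 from by decide, show E8Cartan 4 0 = 0 from by decide, show E8Cartan 4 1 = 0 from by decide, show E8Cartan 4 2 = 0 from by decide, show E8Cartan 4 3 = -1 from by decide, show E8Cartan 4 4 = 2 from by decide, show E8Cartan 4 5 = -1 from by decide, show E8Cartan 4 6 = 0 from by decide, show E8Cartan 4 7 = 0 from by decide, show E8Cartan 5 0 = 0 from by decide, show E8Cartan 5 1 = 0 from by decide, show E8Cartan 5 2 = 0 from by decide, show E8Cartan 5 3 = 0 from by decide, show E8Cartan 5 4 = -1 from by decide, show E8Cartan 5 5 = 2 from by decide, show E8Cartan 5 6 = -1 from by decide, show E8Cartan 5 7 = 0 from by decide, show E8Cartan 6 0 = 0 from by decide, show E8Cartan 6 1 = 0 from by decide, show E8Cartan 6 2 = 0 from by decide, show E8Cartan 6 3 = 0 from by decide, show E8Cartan 6 4 = 0 from by decide, show E8Cartan 6 5 = -1 from by decide, show E8Cartan 6 6 = 2 from by decide, show E8Cartan 6 7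 = -1 from by decide, show E8Cartan 7 0 = 0 from by decide, show E8Cartan 7 1 = 0 from by decide, show E8Cartan 7 2 = 0 from by decide, show E8Cartan 7 3 = 0 from by decide, show E8Cartan 7 4 = 0 from by decide, show E8Cartan 7 5 = 0 from by decide, show E8Cartan 7 6 = -1 from by decide, show E8Cartan 7 7 = 2 from by decide]
  push_cast
  ring

lemma st13_vec8 (a0 a1 a2 a3 a4 a5 a6 a7 : ℝ) :
    ![a0,a1,a2,a3,a4,a5,a6,a7] 0 = a0 ∧ ![a0,a1,a2,a3,a4,a5,a6,a7] 1 = a1 ∧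
    ![a0,a1,a2,a3,a4,a5,a6,a7] 2 = a2 ∧ ![a0,a1,a2,a3,a4,a5,a6,a7] 3 = a3 ∧
    ![a0,a1,a2,a3,a4,a5,a6,a7] 4 = a4 ∧ ![a0,a1,a2,a3,a4,a5,a6,a7] 5 = a5 ∧
    ![a0,a1,a2,a3,a4,a5,a6,a7] 6 = a6 ∧ ![a0,a1,a2,a3,a4,a5,a6,a7] 7 = a7 :=
  ⟨rfl, rfl, rfl, rfl, rfl, rfl, rfl, rfl⟩

noncomputable def st13wv (x : Fin 8 → ℝ) : EuclideanSpace ℝ (Fin 8) :=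
  WithLp.toLp 2 ![Real.sqrt 2*(x 0 - x 2/2), Real.sqrt 2*(x 1 - x 3/2), Real.sqrt (3/2)*(x 2 - 2/3*x 3),
    Real.sqrt (5/6)*(x 3 - 6/5*x 4), Real.sqrt (4/5)*(x 4 - 5/4*x 5), Real.sqrt (3/4)*(x 5 - 4/3*x 6),
    Real.sqrt (2/3)*(x 6 - 3/2*x 7), Real.sqrt (1/2)*(x 7)]

lemma st13_pairCR_inner (x y : Fin 8 → ℝ) : pairCR x y = inner ℝ (st13wv x) (st13wv y) := by
  have s1 : Real.sqrt 2 * Real.sqrt 2 = 2 := Real.mul_self_sqrt (by norm_num)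
  have s2 : Real.sqrt (3/2) * Real.sqrt (3/2) = 3/2 := Real.mul_self_sqrt (by norm_num)
  have s3 : Real.sqrt (5/6) * Real.sqrt (5/6) = 5/6 := Real.mul_self_sqrt (by norm_num)
  have s4 : Real.sqrt (4/5) * Real.sqrt (4/5) = 4/5 := Real.mul_self_sqrt (by norm_num)
  have s5 : Real.sqrt (3/4) * Real.sqrt (3/4) = 3/4 := Real.mul_self_sqrt (by norm_num)
  have s6 : Real.sqrt (2/3) * Real.sqrt (2/3) = 2/3 := Real.mul_self_sqrt (by norm_num)
  have s7 : Real.sqrt (1/2) * Real.sqrt (1/2) = 1/2 := Real.mul_self_sqrt (by norm_num)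
  have hin : (inner ℝ (st13wv x) (st13wv y) : ℝ) = ∑ i, (st13wv x i) * (st13wv y i) := by
    rw [PiLp.inner_apply]
    exact Finset.sum_congr rfl fun i _ => by rw [RCLike.inner_apply, starRingEnd_apply, star_trivial, mul_comm]
  rw [st13_pairCR_expand, hin, Fin.sum_univ_eight]
  simp only [st13wv, WithLp.ofLp_toLp, (st13_vec8 _ _ _ _ _ _ _ _).1, (st13_vec8 _ _ _ _ _ _ _ _).2.1,
    (st13_vec8 _ _ _ _ _ _ _ _).2.2.1, (st13_vec8 _ _ _ _ _ _ _ _).2.2.2.1,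
    (st13_vec8 _ _ _ _ _ _ _ _).2.2.2.2.1, (st13_vec8 _ _ _ _ _ _ _ _).2.2.2.2.2.1,
    (st13_vec8 _ _ _ _ _ _ _ _).2.2.2.2.2.2.1, (st13_vec8 _ _ _ _ _ _ _ _).2.2.2.2.2.2.2]
  linear_combination (-((x 0 - x 2/2)*(y 0 - y 2/2)) - (x 1 - x 3/2)*(y 1 - y 3/2))*s1
    + (-((x 2 - 2/3*x 3)*(y 2 - 2/3*y 3)))*s2 + (-((x 3 - 6/5*x 4)*(y 3 - 6/5*y 4)))*s3
    + (-((x 4 - 5/4*x 5)*(y 4 - 5/4*y 5)))*s4 + (-((x 5 - 4/3*x 6)*(y 5 - 4/3*y 6)))*s5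
    + (-((x 6 - 3/2*x 7)*(y 6 - 3/2*y 7)))*s6 + (-(x 7*y 7))*s7

lemma st13_pairCR_self_nonneg (x : Fin 8 → ℝ) : 0 ≤ pairCR x x := by
  rw [st13_pairCR_inner]; exact real_inner_self_nonneg

lemma st13_pairCR_CS (x y : Fin 8 → ℝ) : pairCR x y * pairCR x y ≤ pairCR x x * pairCR y y := by
  rw [st13_pairCR_inner x y, st13_pairCR_inner x x, st13_pairCR_inner y y]
  exact real_inner_mul_inner_self_le _ _

def AC (w : Fin 8 → ℤ) (j : Fin 8) : ℤ := ∑ i, w i * E8Cartan i j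

lemma st13_pairCZ_cast (a b : Fin 8 → ℤ) :
    ((pairCZ a b : ℤ) : ℝ) = pairCR (fun i => (a i : ℝ)) (fun i => (b i : ℝ)) := by
  unfold pairCZ pairCR
  push_cast
  rfl

lemma st13_pairCZ_self_nonneg (w : Fin 8 → ℤ) : 0 ≤ pairCZ w w := by
  have h := st13_pairCR_self_nonneg (fun i => (w i : ℝ))
  rw [← st13_pairCZ_cast] at h
  exact_mod_cast h

lemma st13_pairCR_sumAC (w : Fin 8 → ℤ) (x : Fin 8 → ℝ) :
    pairCR (fun i => (w i : ℝ)) x = ∑ j, ((AC w j : ℤ) : ℝ) * x j := by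
  unfold pairCR AC
  rw [Finset.sum_comm]
  refine Finset.sum_congr rfl fun j _ => ?_
  push_cast
  rw [Finset.sum_mul]

lemma st13_pairCZ_sumAC (w : Fin 8 → ℤ) : pairCZ w w = ∑ j, AC w j * w j := by
  unfold pairCZ AC
  rw [Finset.sum_comm]
  exact Finset.sum_congr rfl fun j _ => (Finset.sum_mul _ _ _).symm

lemma st13_AC_zero_self (w : Fin 8 → ℤ) (h : ∀ j, AC w j = 0) : pairCZ w w = 0 := by
  rw [st13_pairCZ_sumAC]
  exact Finset.sum_eq_zero fun j _ => by rw [h j]; ring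

lemma st13_pairCR_zero_right (x : Fin 8 → ℝ) : pairCR x 0 = 0 := by
  unfold pairCR
  simp

lemma st13_one_le_sq {a : ℤ} (h : a ≠ 0) : 1 ≤ a ^ 2 := by
  nlinarith [Int.one_le_abs h, sq_abs a, abs_nonneg a]

lemma st13_vec6 (a0 a1 a2 a3 a4 a5 : ℝ) :
    ![a0,a1,a2,a3,a4,a5] 0 = a0 ∧ ![a0,a1,a2,a3,a4,a5] 1 = a1 ∧ ![a0,a1,a2,a3,a4,a5] 2 = a2 ∧
    ![a0,a1,a2,a3,a4,a5] 3 = a3 ∧ ![a0,a1,a2,a3,a4,a5] 4 = a4 ∧ ![a0,a1,a2,a3,a4,a5] 5 = a5 :=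
  ⟨rfl, rfl, rfl, rfl, rfl, rfl⟩

lemma st13_QRf1 (v : Fin 6 → ℤ) (m l : Fin 8 → ℤ) (s r : ℝ) :
    QR (incl (v, m, l)) (f1 s r)
      = (v 0 : ℝ) + 2*(v 1 : ℝ) + s*(v 2 : ℝ) + r*(v 4 : ℝ) := by
  show ((v 0 : ℝ) * (![2,1,0,s,0,r] 1) + (v 1 : ℝ) * (![2,1,0,s,0,r] 0)
      + (v 2 : ℝ) * (![2,1,0,s,0,r] 3) + (v 3 : ℝ) * (![2,1,0,s,0,r] 2)
      + (v 4 : ℝ) * (![2,1,0,s,0,r] 5) + (v 5 : ℝ) * (![2,1,0,s,0,r] 4))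
      - pairCR (fun i => (m i : ℝ)) 0 - pairCR (fun i => (l i : ℝ)) 0 = _
  rw [st13_pairCR_zero_right, st13_pairCR_zero_right,
    (st13_vec6 2 1 0 s 0 r).1, (st13_vec6 2 1 0 s 0 r).2.1, (st13_vec6 2 1 0 s 0 r).2.2.1,
    (st13_vec6 2 1 0 s 0 r).2.2.2.1, (st13_vec6 2 1 0 s 0 r).2.2.2.2.1,
    (st13_vec6 2 1 0 s 0 r).2.2.2.2.2]
  ring

lemma st13_QRf2 (v : Fin 6 → ℤ) (m l : Fin 8 → ℤ) (n q : ℤ) (e : Fin 8 → ℝ) (s r : ℝ) :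
    QR (incl (v, m, l)) (f2 n q e s r)
      = (v 1 : ℝ)*((n : ℝ)*r^2 - (q : ℝ)*s) + 2*(q : ℝ)*(v 2 : ℝ) + (q : ℝ)*(v 3 : ℝ)
        - (n : ℝ)*r*(v 5 : ℝ) - pairCR (fun i => (l i : ℝ)) e := by
  have h0 : pairCR (fun i => (m i : ℝ)) 0 = 0 := st13_pairCR_zero_right _
  show ((v 0 : ℝ) * 0 + (v 1 : ℝ) * ((n : ℝ) * r ^ 2 - (q : ℝ) * s)
      + (v 2 : ℝ) * (2 * (q : ℝ)) + (v 3 : ℝ) * (q : ℝ)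
      + (v 4 : ℝ) * 0 + (v 5 : ℝ) * (-((n : ℝ) * r)))
      - pairCR (fun i => (m i : ℝ)) 0 - pairCR (fun i => (l i : ℝ)) e = _
  rw [h0]; ring

lemma st13_QRf3 (v : Fin 6 → ℤ) (m l : Fin 8 → ℤ) (n q : ℤ) (e : Fin 8 → ℝ) (s r : ℝ) :
    QR (incl (v, m, l)) (f3 n q e s r)
      = -(r*(v 1 : ℝ)) + 2*(n : ℝ)*(q : ℝ)*r*(v 2 : ℝ) + 2*(q : ℝ)^2*(v 4 : ℝ) + (v 5 : ℝ)
        - pairCR (fun i => (m i : ℝ)) e := by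
  have h0 : pairCR (fun i => (l i : ℝ)) 0 = 0 := st13_pairCR_zero_right _
  show ((v 0 : ℝ) * 0 + (v 1 : ℝ) * (-r) + (v 2 : ℝ) * (2 * (n : ℝ) * (q : ℝ) * r)
      + (v 3 : ℝ) * 0 + (v 4 : ℝ) * (2 * (q : ℝ) ^ 2) + (v 5 : ℝ) * 1)
      - pairCR (fun i => (m i : ℝ)) e - pairCR (fun i => (l i : ℝ)) 0 = _
  rw [h0]; ring

lemma st13_QZ_self (v : Fin 6 → ℤ) (m l : Fin 8 → ℤ) :
    QZ (v, m, l) (v, m, l) = 2*(v 0 * v 1 + v 2 * v 3 + v 4 * v 5) - pairCZ m m - pairCZ l l := by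
  show (v 0 * v 1 + v 1 * v 0 + v 2 * v 3 + v 3 * v 2 + v 4 * v 5 + v 5 * v 4)
      - pairCZ m m - pairCZ l l = _
  ring

set_option maxHeartbeats 1000000 in
lemma st13_master (e : Fin 8 → ℝ) (he : LinearIndependent ℚ (fam45 e))
    (t a b z : ℤ) (B A : Fin 8 → ℤ)
    (h : (t:ℝ) * (∑ j, (B j : ℝ) * e j)^2 + (a:ℝ) * (∑ j, (B j:ℝ) * e j)
        + (b:ℝ) * (∑ j, (A j:ℝ) * e j) + (z:ℝ) = 0) :
    z = 0 ∧ (∀ j, a * B j + b * A j = 0) ∧ (t = 0 ∨ ∀ j, B j = 0) := by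
  classical
  simp only [Fin.sum_univ_eight] at h
  set F : Fin 8 × Fin 8 → ℝ := fun p =>
    ((if p.1 = p.2 then (t * B p.1 ^ 2 : ℤ) else (2 * t * B p.1 * B p.2 : ℤ) : ℤ) : ℝ)
      * (e p.1 * e p.2) with hF
  set g : Option (Fin 8 ⊕ {p : Fin 8 × Fin 8 // p.1 ≤ p.2}) → ℚ :=
    fun x => match x with
      | none => (z : ℚ)
      | some (Sum.inl i) => ((a * B i + b * A i : ℤ) : ℚ)
      | some (Sum.inr p) =>
          ((if p.1.1 = p.1.2 then (t * B p.1.1 ^ 2 : ℤ) else (2 * t * B p.1.1 * B p.1.2 : ℤ) : ℤ) : ℚ)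
    with hg
  have hsum : ∑ x, g x • fam45 e x = 0 := by
    rw [Fintype.sum_option, Fintype.sum_sum_type]
    have h1 : ∀ x : {p : Fin 8 × Fin 8 // p.1 ≤ p.2},
        g (some (Sum.inr x)) • fam45 e (some (Sum.inr x)) = F (x : Fin 8 × Fin 8) := by
      rintro ⟨⟨i, j⟩, hij⟩
      simp only [hg, hF, fam45, Rat.smul_def]
      split_ifs <;> push_cast <;> ring
    have h2 : ∑ x : {p : Fin 8 × Fin 8 // p.1 ≤ p.2},
        g (some (Sum.inr x)) • fam45 e (some (Sum.inr x))
        = ∑ p ∈ Finset.univ.filter (fun p : Fin 8 × Fin 8 => p.1 ≤ p.2), F p := by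
      rw [Finset.sum_subtype (p := fun p : Fin 8 × Fin 8 => p.1 ≤ p.2)
        (Finset.univ.filter (fun p : Fin 8 × Fin 8 => p.1 ≤ p.2)) (fun x => by simp) F]
      exact (Finset.sum_congr rfl fun x _ => h1 x).symm
    rw [h2, Finset.sum_filter, Fintype.sum_prod_type]
    simp only [hg, hF, fam45, Rat.smul_def, Fin.sum_univ_eight]
    norm_num
    push_cast
    linear_combination h
  have hall := Fintype.linearIndependent_iff.mp he g hsum
  have hz := hall none
  simp only [hg] at hz
  have hA := fun j => hall (some (Sum.inl j))
  simp only [hg] at hA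
  refine ⟨by exact_mod_cast hz, fun j => by exact_mod_cast hA j, ?_⟩
  by_cases ht : t = 0
  · exact Or.inl ht
  · refine Or.inr fun j => ?_
    have h3 := hall (some (Sum.inr ⟨(j, j), le_refl _⟩))
    simp only [hg, if_pos rfl] at h3
    have h4 : (t * B j ^ 2 : ℤ) = 0 := by exact_mod_cast h3
    rcases mul_eq_zero.mp h4 with hx | hx
    · exact absurd hx ht
    · exact pow_eq_zero_iff (by norm_num) |>.mp hx

set_option maxHeartbeats 16000000 in
/-- If the 45 numbers `1`, `eᵢ`, `eᵢ·eⱼ` are linearly independent over `ℚ` and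
`|(e,e)| ≤ 1/2`, then for every `(s,r) ∈ ℝ²` there is no `d ∈ L` with
`Q(d,d) = −2` and `Q(d,f₁(s,r)) = Q(d,f₂(s,r)) = Q(d,f₃(s,r)) = 0`. -/
theorem statement13 (e : Fin 8 → ℝ) (he : LinearIndependent ℚ (fam45 e))
    (he' : |innE8R e e| ≤ 1 / 2)
    (n p q : ℤ) (hn : 1 ≤ n) (hp : 1 ≤ p) (hq : 1 ≤ q) (s r : ℝ) :
    ¬ ∃ d : LZ, QZ d d = -2 ∧ QR (incl d) (f1 s r) = 0 ∧
      QR (incl d) (f2 n q e s r) = 0 ∧ QR (incl d) (f3 n q e s r) = 0 := by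
  rintro ⟨⟨v, m, l⟩, h4, h1, h2, h3⟩
  rw [st13_QRf1] at h1
  rw [st13_QRf2, st13_pairCR_sumAC] at h2
  rw [st13_QRf3, st13_pairCR_sumAC] at h3
  rw [st13_QZ_self] at h4
  have hnR : (1:ℝ) ≤ (n:ℝ) := by exact_mod_cast hn
  have hqR : (1:ℝ) ≤ (q:ℝ) := by exact_mod_cast hq
  have hNm0 : (0:ℤ) ≤ pairCZ m m := st13_pairCZ_self_nonneg m
  have hNl0 : (0:ℤ) ≤ pairCZ l l := st13_pairCZ_self_nonneg l
  have hee : pairCR e e ≤ 1/2 := by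
    simp only [innE8R] at he'
    have habs := abs_le.mp he'
    linarith [habs.1]
  have hee0 : (0:ℝ) ≤ pairCR e e := st13_pairCR_self_nonneg e
  by_cases hd1 : v 1 = 0
  · have hd1R : ((v 1 : ℤ):ℝ) = 0 := by exact_mod_cast hd1
    by_cases hd2 : v 2 = 0
    · -- CASE A
      have hd2R : ((v 2 : ℤ):ℝ) = 0 := by exact_mod_cast hd2
      obtain ⟨hz1, hB1, -⟩ := st13_master e he 0 (-1) 0 (2*q^2*(v 4) + v 5) (AC m) (AC l)
        (by push_cast; linear_combination h3 + r*hd1R - 2*(n:ℝ)*(q:ℝ)*r*hd2R)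
      have hB : ∀ j, AC m j = 0 := fun j => by have := hB1 j; linarith
      have hNm : pairCZ m m = 0 := st13_AC_zero_self m hB
      by_cases hd4 : v 4 = 0
      · have hd5 : v 5 = 0 := by rw [hd4] at hz1; simpa using hz1
        have hd5R : ((v 5 : ℤ):ℝ) = 0 := by exact_mod_cast hd5
        obtain ⟨-, hA1, -⟩ := st13_master e he 0 (-1) 0 (q*(v 3)) (AC l) (AC l)
          (by push_cast
              linear_combination h2 - ((n:ℝ)*r^2 - (q:ℝ)*s)*hd1R - 2*(q:ℝ)*hd2R + (n:ℝ)*r*hd5R)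
        have hA : ∀ j, AC l j = 0 := fun j => by have := hA1 j; linarith
        have hNl : pairCZ l l = 0 := st13_AC_zero_self l hA
        rw [hd1, hd2, hd5, hNm, hNl] at h4
        norm_num at h4
      · obtain ⟨-, hA1, -⟩ := st13_master e he 0 (-(v 4)) 0 (q*(v 3)*(v 4) + n*(v 0)*(v 5)) (AC l) (AC l)
          (by push_cast
              linear_combination (v 4:ℝ)*h2 + (n:ℝ)*(v 5:ℝ)*h1
                - ((v 4:ℝ)*((n:ℝ)*r^2 - (q:ℝ)*s) + 2*(n:ℝ)*(v 5:ℝ))*hd1R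
                - (2*(q:ℝ)*(v 4:ℝ) + (n:ℝ)*s*(v 5:ℝ))*hd2R)
        have hA : ∀ j, AC l j = 0 := fun j => by
          have ha := hA1 j
          have hb : (-(v 4))*(AC l j) = 0 := by linarith
          rcases mul_eq_zero.mp hb with hx | hx
          · exact absurd (neg_eq_zero.mp hx) hd4
          · exact hx
        have hNl : pairCZ l l = 0 := st13_AC_zero_self l hA
        rw [hd1, hd2, hNm, hNl] at h4
        have h5e : v 5 = -(2*q^2*(v 4)) := by linarith [hz1]
        rw [h5e] at h4
        have hq2 : (1:ℤ) ≤ q^2 := by nlinarith [hq]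
        nlinarith [h4, hq2, st13_one_le_sq hd4]
    · -- CASE B
      obtain ⟨hzB, -, -⟩ := st13_master e he 0 (-(v 5)) (-(2*q*(v 2)))
        (4*q^2*(v 2)^2 + 2*q^2*(v 2)*(v 3) + 2*q^2*(v 4)*(v 5) + (v 5)^2) (AC m) (AC l)
        (by push_cast
            linear_combination 2*(q:ℝ)*(v 2:ℝ)*h2 + (v 5:ℝ)*h3
              + (r*(v 5:ℝ) - 2*(q:ℝ)*(v 2:ℝ)*((n:ℝ)*r^2 - (q:ℝ)*s))*hd1R)
      have key : q^2*(pairCZ m m) + q^2*(pairCZ l l) + 4*q^2*(v 2)^2 + (v 5)^2 - 2*q^2 = 0 := by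
        linear_combination hzB - q^2*h4 + 2*q^2*(v 0)*hd1
      have c1 : (0:ℤ) ≤ q^2*(pairCZ m m) := mul_nonneg (sq_nonneg q) hNm0
      have c2 : (0:ℤ) ≤ q^2*(pairCZ l l) := mul_nonneg (sq_nonneg q) hNl0
      have c3 : q^2 ≤ q^2*(v 2)^2 := by nlinarith [st13_one_le_sq hd2, sq_nonneg q]
      have hq2 : (1:ℤ) ≤ q^2 := by nlinarith [hq]
      nlinarith [key, c1, c2, c3, hq2, sq_nonneg (v 5)]
  · by_cases hc : 2*n*q*(v 2) - v 1 = 0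
    · -- CASE C
      have hd2 : v 2 ≠ 0 := by
        intro h0
        apply hd1
        rw [h0] at hc
        simpa using hc
      have hcR : 2*(n:ℝ)*(q:ℝ)*(v 2:ℝ) - (v 1:ℝ) = 0 := by exact_mod_cast hc
      obtain ⟨hz1, hB1, -⟩ := st13_master e he 0 (-1) 0 (2*q^2*(v 4) + v 5) (AC m) (AC l)
        (by push_cast; linear_combination h3 - r*hcR)
      have hB : ∀ j, AC m j = 0 := fun j => by have := hB1 j; linarith
      have hNm : pairCZ m m = 0 := st13_AC_zero_self m hB
      have h1e : v 1 = 2*n*q*(v 2) := by linarith [hc]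
      have h5e : v 5 = -(2*q^2*(v 4)) := by linarith [hz1]
      have h1eR : (v 1:ℝ) = 2*(n:ℝ)*(q:ℝ)*(v 2:ℝ) := by exact_mod_cast h1e
      have h5eR : (v 5:ℝ) = -(2*(q:ℝ)^2*(v 4:ℝ)) := by exact_mod_cast h5e
      have hquad : (n:ℝ)*(v 1:ℝ)*(v 2:ℝ)*r^2 + ((q:ℝ)*(v 1:ℝ)*(v 4:ℝ) - (n:ℝ)*(v 2:ℝ)*(v 5:ℝ))*r
          + ((q:ℝ)*((v 0:ℝ)*(v 1:ℝ) + 2*(v 1:ℝ)^2 + 2*(v 2:ℝ)^2 + (v 2:ℝ)*(v 3:ℝ))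
            - (v 2:ℝ)*(∑ j, ((AC l j : ℤ):ℝ) * e j)) = 0 := by
        linear_combination (v 2:ℝ)*h2 + (q:ℝ)*(v 1:ℝ)*h1
      have hquad2 : 2*(n:ℝ)^2*(q:ℝ)*(v 2:ℝ)^2*r^2 + 4*(n:ℝ)*(q:ℝ)^2*(v 2:ℝ)*(v 4:ℝ)*r
          + ((q:ℝ)*(2*(n:ℝ)*(q:ℝ)*(v 2:ℝ)*(v 0:ℝ) + 8*(n:ℝ)^2*(q:ℝ)^2*(v 2:ℝ)^2
              + 2*(v 2:ℝ)^2 + (v 2:ℝ)*(v 3:ℝ))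
            - (v 2:ℝ)*(∑ j, ((AC l j : ℤ):ℝ) * e j)) = 0 := by
        linear_combination hquad
          + (-((n:ℝ)*(v 2:ℝ)*r^2) - (q:ℝ)*(v 4:ℝ)*r
              - (q:ℝ)*((v 0:ℝ) + 2*(v 1:ℝ) + 4*(n:ℝ)*(q:ℝ)*(v 2:ℝ)))*h1eR
          + ((n:ℝ)*(v 2:ℝ)*r)*h5eR
      have hv2ne : (v 2:ℝ) ≠ 0 := Int.cast_ne_zero.mpr hd2
      have hv2sq : (0:ℝ) < (v 2:ℝ)^2 := by positivity
      have hn2 : (1:ℝ) ≤ (n:ℝ)^2 := by nlinarith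
      have hApos : (0:ℝ) < (n:ℝ)^2*(q:ℝ)*(v 2:ℝ)^2 :=
        mul_pos (mul_pos (by nlinarith : (0:ℝ) < (n:ℝ)^2) (by linarith : (0:ℝ) < (q:ℝ))) hv2sq
      have hdisc : (q:ℝ)*(2*(n:ℝ)*(q:ℝ)*(v 2:ℝ)*(v 0:ℝ) + 8*(n:ℝ)^2*(q:ℝ)^2*(v 2:ℝ)^2
            + 2*(v 2:ℝ)^2 + (v 2:ℝ)*(v 3:ℝ))
          - (v 2:ℝ)*(∑ j, ((AC l j : ℤ):ℝ) * e j) ≤ 2*(q:ℝ)^3*(v 4:ℝ)^2 := by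
        nlinarith [hquad2, sq_nonneg (4*(n:ℝ)^2*(q:ℝ)*(v 2:ℝ)^2*r + 4*(n:ℝ)*(q:ℝ)^2*(v 2:ℝ)*(v 4:ℝ)),
          hApos]
      have h4R : 2*((v 0:ℝ)*(v 1:ℝ) + (v 2:ℝ)*(v 3:ℝ) + (v 4:ℝ)*(v 5:ℝ))
          - ((pairCZ m m : ℤ):ℝ) - ((pairCZ l l : ℤ):ℝ) = -2 := by exact_mod_cast h4
      have hNmR : ((pairCZ m m : ℤ):ℝ) = 0 := by exact_mod_cast hNm
      have hsc : 2*(n:ℝ)*(q:ℝ)^2*(v 2:ℝ)*(v 0:ℝ) + (q:ℝ)*((v 2:ℝ)*(v 3:ℝ))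
          - (q:ℝ)*((pairCZ l l : ℤ):ℝ)/2 + (q:ℝ) - 2*(q:ℝ)^3*(v 4:ℝ)^2 = 0 := by
        linear_combination ((q:ℝ)/2)*h4R - (q:ℝ)*(v 0:ℝ)*h1eR - (q:ℝ)*(v 4:ℝ)*h5eR + ((q:ℝ)/2)*hNmR
      have hNlR0 : (0:ℝ) ≤ ((pairCZ l l : ℤ):ℝ) := by exact_mod_cast hNl0
      have hv2R1 : (1:ℝ) ≤ (v 2:ℝ)^2 := by exact_mod_cast st13_one_le_sq hd2
      have hM : (v 2:ℝ)*(∑ j, ((AC l j : ℤ):ℝ) * e j)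
          ≥ (q:ℝ)*((pairCZ l l : ℤ):ℝ)/2 - (q:ℝ) + 8*(n:ℝ)^2*(q:ℝ)^3*(v 2:ℝ)^2 + 2*(q:ℝ)*(v 2:ℝ)^2 := by
        linarith [hdisc, hsc]
      have hCS0 := st13_pairCR_CS (fun i => (l i : ℝ)) e
      rw [st13_pairCR_sumAC, ← st13_pairCZ_cast] at hCS0
      have hYl2 : (∑ j, ((AC l j : ℤ):ℝ) * e j)*(∑ j, ((AC l j : ℤ):ℝ) * e j)
          ≤ ((pairCZ l l:ℤ):ℝ)/2 := by
        nlinarith [hCS0, hee, hee0, hNlR0]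
      have h3' : (v 2:ℝ)*(∑ j, ((AC l j : ℤ):ℝ) * e j)
          ≥ ((pairCZ l l:ℤ):ℝ)/2 + 9*(v 2:ℝ)^2 := by
        have e1 : (0:ℝ) ≤ ((q:ℝ)-1)*(((pairCZ l l:ℤ):ℝ)/2 - 1 + 10*(v 2:ℝ)^2) :=
          mul_nonneg (by linarith) (by nlinarith [hNlR0, hv2R1])
        have e2 : (0:ℝ) ≤ 8*(q:ℝ)*(v 2:ℝ)^2*((n:ℝ)^2*(q:ℝ)^2 - 1) := by
          apply mul_nonneg
          · nlinarith [hqR, hv2R1]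
          · nlinarith [hn2, hqR]
        linarith [hM, e1, e2, hv2R1]
      have hfin0 : (0:ℝ) ≤ ((pairCZ l l:ℤ):ℝ)/2 + 9*(v 2:ℝ)^2 := by nlinarith [hNlR0, hv2R1]
      have h5sq := mul_self_le_mul_self hfin0 h3'
      nlinarith [h5sq, hYl2, hNlR0, hv2R1, hv2sq, mul_nonneg hNlR0 (le_of_lt hv2sq)]
    · by_cases hd2 : v 2 = 0
      · -- CASE D
        have hd2R : ((v 2:ℤ):ℝ) = 0 := by exact_mod_cast hd2
        by_cases hd4 : v 4 = 0
        · have hd4R : ((v 4:ℤ):ℝ) = 0 := by exact_mod_cast hd4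
          have hv0R : (v 0:ℝ) + 2*(v 1:ℝ) = 0 := by linear_combination h1 - s*hd2R - r*hd4R
          have hv0 : v 0 = -(2*(v 1)) := by
            have hcast : ((v 0 : ℤ):ℝ) = ((-(2*(v 1)) : ℤ):ℝ) := by push_cast; linarith [hv0R]
            exact_mod_cast hcast
          rw [hv0, hd2, hd4] at h4
          nlinarith [h4, hNm0, hNl0, st13_one_le_sq hd1]
        · obtain ⟨hzD, hB1, -⟩ := st13_master e he 0 (-(v 4)) 0
            ((v 0)*(v 1) + 2*(v 1)^2 + 2*q^2*(v 4)^2 + (v 4)*(v 5)) (AC m) (AC l)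
            (by push_cast
                linear_combination (v 4:ℝ)*h3 + (v 1:ℝ)*h1
                  - (2*(n:ℝ)*(q:ℝ)*r*(v 4:ℝ) + s*(v 1:ℝ))*hd2R)
          have hB : ∀ j, AC m j = 0 := fun j => by
            have ha := hB1 j
            have hb : (-(v 4))*(AC m j) = 0 := by linarith
            rcases mul_eq_zero.mp hb with hx | hx
            · exact absurd (neg_eq_zero.mp hx) hd4
            · exact hx
          have hNm : pairCZ m m = 0 := st13_AC_zero_self m hB
          rw [hd2, hNm] at h4
          have k : (1:ℤ) ≤ q^2*(v 4)^2 := by nlinarith [st13_one_le_sq hd4, hq]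
          nlinarith [h4, hzD, hNl0, st13_one_le_sq hd1, k]
      · -- CASE E
        have hn0 : n ≠ 0 := by omega
        have htne : n*(v 1)*(v 2) ≠ 0 := mul_ne_zero (mul_ne_zero hn0 hd1) hd2
        have hrc : r*(2*(n:ℝ)*(q:ℝ)*(v 2:ℝ) - (v 1:ℝ)) - (∑ j, ((AC m j : ℤ):ℝ) * e j)
            + (2*(q:ℝ)^2*(v 4:ℝ) + (v 5:ℝ)) = 0 := by linear_combination h3
        obtain ⟨hzE, hAB, htB⟩ := st13_master e he (n*(v 1)*(v 2))
          ((q*(v 1)*(v 4) - n*(v 2)*(v 5))*(2*n*q*(v 2) - v 1)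
            - 2*(n*(v 1)*(v 2))*(2*q^2*(v 4) + v 5))
          (-((2*n*q*(v 2) - v 1)^2*(v 2)))
          (n*(v 1)*(v 2)*(2*q^2*(v 4) + v 5)^2
            - (q*(v 1)*(v 4) - n*(v 2)*(v 5))*(2*n*q*(v 2) - v 1)*(2*q^2*(v 4) + v 5)
            + q*((v 0)*(v 1) + 2*(v 1)^2 + 2*(v 2)^2 + (v 2)*(v 3))*(2*n*q*(v 2) - v 1)^2)
          (AC m) (AC l)
          (by push_cast
              linear_combination
                ((2*(n:ℝ)*(q:ℝ)*(v 2:ℝ) - (v 1:ℝ))^2*(v 2:ℝ))*h2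
                + ((q:ℝ)*(v 1:ℝ)*(2*(n:ℝ)*(q:ℝ)*(v 2:ℝ) - (v 1:ℝ))^2)*h1
                - ((n:ℝ)*(v 1:ℝ)*(v 2:ℝ)*(r*(2*(n:ℝ)*(q:ℝ)*(v 2:ℝ) - (v 1:ℝ))
                      + (∑ j, ((AC m j : ℤ):ℝ) * e j) - (2*(q:ℝ)^2*(v 4:ℝ) + (v 5:ℝ)))
                    + ((q:ℝ)*(v 1:ℝ)*(v 4:ℝ) - (n:ℝ)*(v 2:ℝ)*(v 5:ℝ))
                      *(2*(n:ℝ)*(q:ℝ)*(v 2:ℝ) - (v 1:ℝ)))*hrc)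
        have hB : ∀ j, AC m j = 0 := htB.resolve_left htne
        have hbne : -((2*n*q*(v 2) - v 1)^2*(v 2)) ≠ 0 := by
          have h1' := st13_one_le_sq hc
          intro hcon
          rcases mul_eq_zero.mp (neg_eq_zero.mp hcon) with hx | hx
          · linarith [h1', hx.ge, hx.le]
          · exact hd2 hx
        have hA : ∀ j, AC l j = 0 := fun j => by
          have ha := hAB j
          rw [hB j] at ha
          have hb : (-((2*n*q*(v 2) - v 1)^2*(v 2)))*(AC l j) = 0 := by linarith
          exact (mul_eq_zero.mp hb).resolve_left hbne
        have hNm : pairCZ m m = 0 := st13_AC_zero_self m hB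
        have hNl : pairCZ l l = 0 := st13_AC_zero_self l hA
        have hz4 : (v 0)*(v 1) + (v 2)*(v 3) + (v 4)*(v 5) = -1 := by
          rw [hNm, hNl] at h4
          linarith
        have hfinal : 2*q*(q*(v 1)*(v 4) + n*(v 2)*(v 5))^2
            + q*(2*n*q*(v 2) - v 1)^2*(2*(v 1)^2 + 2*(v 2)^2 - 1) = 0 := by
          linear_combination hzE - q*(2*n*q*(v 2) - v 1)^2*hz4
        have k1 : (1:ℤ) ≤ q*(2*n*q*(v 2) - v 1)^2 := by nlinarith [st13_one_le_sq hc, hq]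
        have k2 : (3:ℤ) ≤ 2*(v 1)^2 + 2*(v 2)^2 - 1 := by
          nlinarith [st13_one_le_sq hd1, st13_one_le_sq hd2]
        nlinarith [hfinal, k1, k2, sq_nonneg (q*(v 1)*(v 4) + n*(v 2)*(v 5)), hq]
end
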